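/- Let D = (d_1, ..., d_n) be a nonincreasing sequence of positive integers with d_1 < n. For any j with 2 ≤ j ≤ n: D is graphic if and only if the sequence obtained from D by subtracting 1 from d_1 and from the entry d_{tilde{d}_1} (where tilde{d}_1 = d_1 + 1), reordered and with zeros removed, is graphic, provided d_j = d_{tilde{d}_1}. -/

import Mathlib

open Finset

variable {n : ℕ}

noncomputable def nbr (G : SimpleGraph (Fin n)) (v : Fin n) : Finset (Fin n) :=
  (G.neighborSet v).toFinite.toFinset

lemma mem_nbr {G : SimpleGraph (Fin n)} {v w : Fin n} : w ∈ nbr G v ↔ G.Adj v w := by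
  simp [nbr, SimpleGraph.neighborSet]

noncomputable def dg (G : SimpleGraph (Fin n)) (v : Fin n) : ℕ := (nbr G v).card

lemma natCard_eq_dg (G : SimpleGraph (Fin n)) (v : Fin n) :
    Nat.card (G.neighborSet v) = dg G v := by
  rw [Nat.card_eq_card_finite_toFinset (G.neighborSet v).toFinite]; rfl

lemma dg_comap {m : ℕ} (e : Fin m ≃ Fin n) (G : SimpleGraph (Fin n)) (x : Fin m) :
    dg (G.comap e) x = dg G (e x) := by
  rw [← natCard_eq_dg, ← natCard_eq_dg]
  exact Nat.card_congr (Equiv.subtypeEquiv e fun w => Iff.rfl)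

lemma card_fiber_eq_count (g : Fin n → ℕ) (c : ℕ) :
    Fintype.card {a : Fin n // g a = c} = Multiset.count c ↑(List.ofFn g) := by
  classical
  have h1 : ((List.ofFn g : List ℕ) : Multiset ℕ) = Multiset.map g (univ : Finset (Fin n)).val := by
    rw [Fin.univ_def, List.ofFn_eq_map]
    rfl
  rw [Fintype.card_subtype, h1, Multiset.count_map]
  rw [Finset.card, Finset.filter_val]
  congr 1
  exact Multiset.filter_congr (fun x _ => by constructor <;> intro <;> omega)

lemma perm_extract {f g : Fin n → ℕ} (h : (List.ofFn g).Perm (List.ofFn f)) :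
    ∃ σ : Equiv.Perm (Fin n), ∀ i, g (σ i) = f i := by
  classical
  have hm : ((List.ofFn g : List ℕ) : Multiset ℕ) = ↑(List.ofFn f) := Multiset.coe_eq_coe.mpr h
  have hcount : ∀ c, Fintype.card {a : Fin n // f a = c} = Fintype.card {a : Fin n // g a = c} := by
    intro c
    rw [card_fiber_eq_count, card_fiber_eq_count, hm]
  exact ⟨Equiv.ofFiberEquiv fun c => Fintype.equivOfCardEq (hcount c), fun i =>
    Equiv.ofFiberEquiv_map _ i⟩

/-- A finite sequence of natural numbers (possibly containing zeros) is graphic if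
it is, up to permutation, the degree sequence of a simple graph on `l.length` vertices.
(Zero entries correspond to isolated vertices, so this also captures graphicness
after removal of zeros.) -/
def IsGraphic (l : List ℕ) : Prop :=
  ∃ G : SimpleGraph (Fin l.length),
    List.Perm (List.ofFn fun v => Nat.card (G.neighborSet v)) l

lemma isGraphic_iff (f : Fin n → ℕ) :
    IsGraphic (List.ofFn f) ↔ ∃ G : SimpleGraph (Fin n), ∀ i, dg G i = f i := by
  have hlen : (List.ofFn f).length = n := List.length_ofFn
  constructor
  · rintro ⟨G, hperm⟩
    set e : Fin n ≃ Fin (List.ofFn f).length := finCongr hlen.symm with he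
    have h2 : (List.ofFn fun v => Nat.card (G.neighborSet v)) =
        List.ofFn fun i : Fin n => dg (G.comap e) i := by
      rw [List.ofFn_congr hlen]
      congr 1
      funext i
      rw [natCard_eq_dg, dg_comap]
      rfl
    rw [h2] at hperm
    obtain ⟨σ, hσ⟩ := perm_extract hperm
    exact ⟨(G.comap e).comap σ, fun i => by rw [dg_comap σ]; exact hσ i⟩
  · rintro ⟨G, hG⟩
    set e : Fin (List.ofFn f).length ≃ Fin n := finCongr hlen with he
    refine ⟨G.comap e, ?_⟩
    have h2 : (List.ofFn fun v => Nat.card ((G.comap e).neighborSet v)) = List.ofFn f := by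
      rw [List.ofFn_congr hlen]
      congr 1
      funext i
      rw [natCard_eq_dg, dg_comap]
      simp [he, hG]
    rw [h2]

lemma addEdge (G : SimpleGraph (Fin n)) {a b : Fin n} (hab : a ≠ b) (hnadj : ¬G.Adj a b) :
    ∃ G' : SimpleGraph (Fin n), dg G' a = dg G a + 1 ∧ dg G' b = dg G b + 1 ∧
      ∀ x, x ≠ a → x ≠ b → dg G' x = dg G x := by
  refine ⟨G ⊔ SimpleGraph.fromEdgeSet {s(a, b)}, ?_, ?_, ?_⟩
  · have h : nbr (G ⊔ SimpleGraph.fromEdgeSet {s(a, b)}) a = insert b (nbr G a) := by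
      ext w
      simp only [mem_nbr, SimpleGraph.sup_adj, SimpleGraph.fromEdgeSet_adj, Set.mem_singleton_iff,
        Finset.mem_insert, Sym2.eq_iff]
      aesop
    rw [dg, h, Finset.card_insert_of_notMem (by rw [mem_nbr]; exact hnadj)]; rfl
  · have h : nbr (G ⊔ SimpleGraph.fromEdgeSet {s(a, b)}) b = insert a (nbr G b) := by
      ext w
      simp only [mem_nbr, SimpleGraph.sup_adj, SimpleGraph.fromEdgeSet_adj, Set.mem_singleton_iff,
        Finset.mem_insert, Sym2.eq_iff]
      aesop
    rw [dg, h, Finset.card_insert_of_notMem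
        (by rw [mem_nbr]; exact fun h => hnadj h.symm)]; rfl
  · intro x hxa hxb
    have h : nbr (G ⊔ SimpleGraph.fromEdgeSet {s(a, b)}) x = nbr G x := by
      ext w
      simp only [mem_nbr, SimpleGraph.sup_adj, SimpleGraph.fromEdgeSet_adj, Set.mem_singleton_iff,
        Sym2.eq_iff]
      aesop
    rw [dg, h]; rfl

lemma delEdge (G : SimpleGraph (Fin n)) {a b : Fin n} (hadj : G.Adj a b) :
    ∃ G' : SimpleGraph (Fin n), dg G' a = dg G a - 1 ∧ dg G' b = dg G b - 1 ∧
      ∀ x, x ≠ a → x ≠ b → dg G' x = dg G x := by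
  have hab : a ≠ b := hadj.ne
  have hnadj : ¬G.Adj a a := G.loopless.irrefl a
  refine ⟨G.deleteEdges {s(a, b)}, ?_, ?_, ?_⟩
  · have h : nbr (G.deleteEdges {s(a, b)}) a = (nbr G a).erase b := by
      ext w
      simp only [mem_nbr, SimpleGraph.deleteEdges_adj, Set.mem_singleton_iff, Finset.mem_erase,
        Sym2.eq_iff]
      aesop
    rw [dg, h, Finset.card_erase_of_mem (by rw [mem_nbr]; exact hadj)]; rfl
  · have h : nbr (G.deleteEdges {s(a, b)}) b = (nbr G b).erase a := by
      ext w
      simp only [mem_nbr, SimpleGraph.deleteEdges_adj, Set.mem_singleton_iff, Finset.mem_erase,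
        Sym2.eq_iff]
      aesop
    rw [dg, h, Finset.card_erase_of_mem (by rw [mem_nbr]; exact hadj.symm)]; rfl
  · intro x hxa hxb
    have h : nbr (G.deleteEdges {s(a, b)}) x = nbr G x := by
      ext w
      simp only [mem_nbr, SimpleGraph.deleteEdges_adj, Set.mem_singleton_iff, Sym2.eq_iff]
      aesop
    rw [dg, h]; rfl

lemma switch (G : SimpleGraph (Fin n)) {a b c u : Fin n}
    (hac : G.Adj a c) (hab : ¬G.Adj a b) (hne_ab : a ≠ b)
    (hbu : G.Adj b u) (hcu : ¬G.Adj c u) (huc : u ≠ c) (hua : u ≠ a) :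
    ∃ G' : SimpleGraph (Fin n), (∀ x, dg G' x = dg G x) ∧
      nbr G' a = insert b ((nbr G a).erase c) := by
  have hnac : a ≠ c := hac.ne
  have hnbu : b ≠ u := hbu.ne
  have hnbc : b ≠ c := fun h => hab (h ▸ hac)
  classical
  set G' : SimpleGraph (Fin n) :=
    { Adj := fun x y => (G.Adj x y ∧ s(x, y) ≠ s(a, c) ∧ s(x, y) ≠ s(b, u)) ∨
        ((s(x, y) = s(a, b) ∨ s(x, y) = s(c, u)) ∧ x ≠ y)
      symm := by
        constructor
        intro x y h
        rw [Sym2.eq_swap (a := y)]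
        rcases h with ⟨h1, h2⟩ | ⟨h1, h2⟩
        · exact Or.inl ⟨h1.symm, h2⟩
        · exact Or.inr ⟨h1, h2.symm⟩
      loopless := by
        constructor
        intro x h
        rcases h with ⟨h1, _⟩ | ⟨_, h2⟩
        · exact G.loopless.irrefl x h1
        · exact h2 rfl } with hG'
  have hadj : ∀ x y, G'.Adj x y ↔ ((G.Adj x y ∧ s(x, y) ≠ s(a, c) ∧ s(x, y) ≠ s(b, u)) ∨
      ((s(x, y) = s(a, b) ∨ s(x, y) = s(c, u)) ∧ x ≠ y)) := fun x y => Iff.rfl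
  have ha : nbr G' a = insert b ((nbr G a).erase c) := by
    ext w
    simp only [mem_nbr, hadj, Finset.mem_insert, Finset.mem_erase, Sym2.eq_iff]
    aesop
  have hb : nbr G' b = insert a ((nbr G b).erase u) := by
    ext w
    simp only [mem_nbr, hadj, Finset.mem_insert, Finset.mem_erase, Sym2.eq_iff]
    aesop
  have hc : nbr G' c = insert u ((nbr G c).erase a) := by
    ext w
    simp only [mem_nbr, hadj, Finset.mem_insert, Finset.mem_erase, Sym2.eq_iff]
    aesop
  have hu : nbr G' u = insert c ((nbr G u).erase b) := by
    ext w
    simp only [mem_nbr, hadj, Finset.mem_insert, Finset.mem_erase, Sym2.eq_iff]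
    aesop
  have hother : ∀ x, x ≠ a → x ≠ b → x ≠ c → x ≠ u → nbr G' x = nbr G x := by
    intro x hxa hxb hxc hxu
    ext w
    simp only [mem_nbr, hadj, Sym2.eq_iff]
    aesop
  refine ⟨G', ?_, ha⟩
  intro x
  by_cases hxa : x = a
  · subst hxa
    rw [dg, dg, ha, Finset.card_insert_of_notMem (by simp [Finset.mem_erase, mem_nbr, hab]),
      Finset.card_erase_of_mem (mem_nbr.mpr hac)]
    have : 1 ≤ (nbr G x).card := Finset.card_pos.mpr ⟨c, mem_nbr.mpr hac⟩
    omega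
  by_cases hxb : x = b
  · subst hxb
    rw [dg, dg, hb, Finset.card_insert_of_notMem
        (by simp only [Finset.mem_erase, mem_nbr]; exact fun h => hab (h.2.symm)),
      Finset.card_erase_of_mem (mem_nbr.mpr hbu)]
    have : 1 ≤ (nbr G x).card := Finset.card_pos.mpr ⟨u, mem_nbr.mpr hbu⟩
    omega
  by_cases hxc : x = c
  · subst hxc
    rw [dg, dg, hc, Finset.card_insert_of_notMem
        (by simp only [Finset.mem_erase, mem_nbr]; exact fun h => hcu h.2),
      Finset.card_erase_of_mem (mem_nbr.mpr hac.symm)]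
    have : 1 ≤ (nbr G x).card := Finset.card_pos.mpr ⟨a, mem_nbr.mpr hac.symm⟩
    omega
  by_cases hxu : x = u
  · subst hxu
    rw [dg, dg, hu, Finset.card_insert_of_notMem
        (by simp only [Finset.mem_erase, mem_nbr]; exact fun h => hcu h.2.symm),
      Finset.card_erase_of_mem (mem_nbr.mpr hbu.symm)]
    have : 1 ≤ (nbr G x).card := Finset.card_pos.mpr ⟨b, mem_nbr.mpr hbu.symm⟩
    omega
  · rw [dg, dg, hother x hxa hxb hxc hxu]

section Main

variable {d : ℕ → ℕ}

lemma S_card {n : ℕ} (hn : 0 < n) (m : ℕ) (hm : m < n) :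
    m ≤ (Finset.univ.filter fun x : Fin n => 1 ≤ x.1 ∧ x.1 ≤ m).card := by
  have := Finset.card_le_card_of_injOn (fun i : ℕ => if h : i < n then (⟨i, h⟩ : Fin n) else ⟨0, hn⟩)
    (s := Finset.Icc 1 m) (t := Finset.univ.filter fun x : Fin n => 1 ≤ x.1 ∧ x.1 ≤ m)
    (by intro i hi
        simp only [Finset.mem_coe, Finset.mem_Icc] at hi
        have hin : i < n := by omega
        simp only [Finset.mem_coe, Finset.mem_filter, Finset.mem_univ, true_and, dif_pos hin]
        exact ⟨hi.1, hi.2⟩)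
    (by intro i hi i' hi' hii
        simp only [Finset.mem_coe, Finset.mem_Icc] at hi hi'
        have hin : i < n := by omega
        have hin' : i' < n := by omega
        simp only [dif_pos hin, dif_pos hin', Fin.mk.injEq] at hii
        exact hii)
  simpa [Nat.card_Icc] using this

lemma B_card {n m : ℕ} :
    (Finset.univ.filter fun x : Fin n => 1 ≤ x.1 ∧ x.1 ≤ m).card ≤ m := by
  have := Finset.card_le_card_of_injOn (fun x : Fin n => x.1)
    (s := Finset.univ.filter fun x : Fin n => 1 ≤ x.1 ∧ x.1 ≤ m) (t := Finset.Icc 1 m)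
    (by intro x hx
        simp only [Finset.mem_coe, Finset.mem_filter, Finset.mem_univ, true_and] at hx
        simp only [Finset.mem_coe, Finset.mem_Icc]
        exact hx)
    (by intro x _ y _ h; exact Fin.ext h)
  simpa [Nat.card_Icc] using this

lemma forward_aux {n : ℕ} (hn : 0 < n) (hpos : ∀ i, 1 ≤ i → i ≤ n → 1 ≤ d i)
    (hmono : ∀ i j, 1 ≤ i → i ≤ j → j ≤ n → d j ≤ d i) (h1 : d 1 < n)
    (a0 : Fin n) (ha0 : a0.1 = 0) :
    ∀ (k : ℕ) (G : SimpleGraph (Fin n)), (∀ i, dg G i = d (i.1 + 1)) →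
      d 1 ≤ k + ((nbr G a0).filter fun x => d (d 1 + 1) ≤ dg G x).card →
      ∃ (G' : SimpleGraph (Fin n)) (b : Fin n),
        (∀ i, dg G' i = d (i.1 + 1)) ∧ G'.Adj a0 b ∧ d (b.1 + 1) = d (d 1 + 1) := by
  classical
  have hd1 : 1 ≤ d 1 := hpos 1 le_rfl (by omega)
  have hv1 : 1 ≤ d (d 1 + 1) := hpos _ (by omega) (by omega)
  set v : ℕ := d (d 1 + 1) with hv
  intro k
  induction k with
  | zero =>
    intro G hdeg hk
    by_cases hex : ∃ b ∈ nbr G a0, dg G b = v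
    · obtain ⟨b, hbmem, hbv⟩ := hex
      exact ⟨G, b, hdeg, mem_nbr.mp hbmem, by rw [← hdeg b, hbv]⟩
    · exfalso
      push_neg at hex
      have hc : ∃ c ∈ nbr G a0, dg G c < v := by
        by_contra hcc
        push_neg at hcc
        have hgt : ∀ c ∈ nbr G a0, v < dg G c := fun c hcm =>
          lt_of_le_of_ne (hcc c hcm) (Ne.symm (hex c hcm))
        have hsub : nbr G a0 ⊆ Finset.univ.filter fun x : Fin n => 1 ≤ x.1 ∧ x.1 ≤ d 1 - 1 := by
          intro x hx
          simp only [Finset.mem_filter, Finset.mem_univ, true_and]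
          have hxa : x ≠ a0 := fun h => G.loopless.irrefl a0 (mem_nbr.mp (h ▸ hx))
          have hx1 : 1 ≤ x.1 := by
            rcases Nat.eq_zero_or_pos x.1 with h0 | h
            · exact absurd (Fin.ext (by omega)) hxa
            · exact h
          refine ⟨hx1, ?_⟩
          have hlt : v < d (x.1 + 1) := by rw [← hdeg x]; exact hgt x hx
          by_contra hcon
          have : d (x.1 + 1) ≤ d (d 1 + 1) := hmono _ _ (by omega) (by omega) (by omega)
          omega
        have hcard := Finset.card_le_card hsub
        have h3 : (nbr G a0).card = d 1 := by
          have h := hdeg a0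
          rw [ha0] at h
          exact h
        have h2 := B_card (n := n) (m := d 1 - 1)
        omega
      obtain ⟨c, hcmem, hclt⟩ := hc
      have h3 : (nbr G a0).card = d 1 := by
        have h := hdeg a0
        rw [ha0] at h
        exact h
      have heq := Finset.eq_of_subset_of_card_le
        (Finset.filter_subset (fun x => v ≤ dg G x) (nbr G a0)) (by omega)
      rw [← heq] at hcmem
      have := (Finset.mem_filter.mp hcmem).2
      omega
  | succ k ih =>
    intro G hdeg hk
    by_cases hex : ∃ b ∈ nbr G a0, dg G b = v
    · obtain ⟨b, hbmem, hbv⟩ := hex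
      exact ⟨G, b, hdeg, mem_nbr.mp hbmem, by rw [← hdeg b, hbv]⟩
    push_neg at hex
    have hc : ∃ c ∈ nbr G a0, dg G c < v := by
      by_contra hcc
      push_neg at hcc
      have hgt : ∀ c ∈ nbr G a0, v < dg G c := fun c hcm =>
        lt_of_le_of_ne (hcc c hcm) (Ne.symm (hex c hcm))
      have hsub : nbr G a0 ⊆ Finset.univ.filter fun x : Fin n => 1 ≤ x.1 ∧ x.1 ≤ d 1 - 1 := by
        intro x hx
        simp only [Finset.mem_filter, Finset.mem_univ, true_and]
        have hxa : x ≠ a0 := fun h => G.loopless.irrefl a0 (mem_nbr.mp (h ▸ hx))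
        have hx1 : 1 ≤ x.1 := by
          rcases Nat.eq_zero_or_pos x.1 with h0 | h
          · exact absurd (Fin.ext (by omega)) hxa
          · exact h
        refine ⟨hx1, ?_⟩
        have hlt : v < d (x.1 + 1) := by rw [← hdeg x]; exact hgt x hx
        by_contra hcon
        have : d (x.1 + 1) ≤ d (d 1 + 1) := hmono _ _ (by omega) (by omega) (by omega)
        omega
      have hcard := Finset.card_le_card hsub
      have h3 : (nbr G a0).card = d 1 := by
        have h := hdeg a0
        rw [ha0] at h
        exact h
      have h2 := B_card (n := n) (m := d 1 - 1)
      omega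
    obtain ⟨c, hcmem, hclt⟩ := hc
    have h3 : (nbr G a0).card = d 1 := by
      have h := hdeg a0
      rw [ha0] at h
      exact h
    have hb : ∃ b, (1 ≤ b.1 ∧ b.1 ≤ d 1) ∧ b ∉ nbr G a0 := by
      by_contra hbb
      push_neg at hbb
      have hsub : (Finset.univ.filter fun x : Fin n => 1 ≤ x.1 ∧ x.1 ≤ d 1) ⊆
          (nbr G a0).erase c := by
        intro x hx
        simp only [Finset.mem_filter, Finset.mem_univ, true_and] at hx
        refine Finset.mem_erase.mpr ⟨?_, hbb x hx⟩
        rintro rfl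
        have : d (d 1 + 1) ≤ d (x.1 + 1) := hmono _ _ (by omega) (by omega) (by omega)
        rw [← hdeg x] at this
        omega
      have hcard := Finset.card_le_card hsub
      have hS := S_card hn (d 1) h1
      have : ((nbr G a0).erase c).card = d 1 - 1 := by
        rw [Finset.card_erase_of_mem hcmem, h3]
      omega
    obtain ⟨b, ⟨hb1, hb2⟩, hbn⟩ := hb
    have hbv : v ≤ dg G b := by
      rw [hdeg b]
      exact hmono _ _ (by omega) (by omega) (by omega)
    have hnadj : ¬G.Adj a0 b := fun h => hbn (mem_nbr.mpr h)
    have hba : a0 ≠ b := fun h => by rw [← h] at hb1; omega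
    have hu : ∃ u, G.Adj b u ∧ ¬G.Adj c u ∧ u ≠ c ∧ u ≠ a0 := by
      by_contra huu
      push_neg at huu
      have hsub : nbr G b ⊆ insert c ((nbr G c).erase a0) := by
        intro y hy
        have hadjby : G.Adj b y := mem_nbr.mp hy
        have hya : y ≠ a0 := by
          rintro rfl
          exact hnadj hadjby.symm
        by_cases hyc : y = c
        · simp [hyc]
        · have := huu y hadjby
          by_cases hcy : G.Adj c y
          · exact Finset.mem_insert_of_mem (Finset.mem_erase.mpr ⟨hya, mem_nbr.mpr hcy⟩)
          · exact absurd (this hcy hyc) hya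
      have hcard := Finset.card_le_card hsub
      have hc1 : a0 ∈ nbr G c := mem_nbr.mpr (mem_nbr.mp hcmem).symm
      have h4 : ((nbr G c).erase a0).card = dg G c - 1 := Finset.card_erase_of_mem hc1
      have h5 : 1 ≤ dg G c := Finset.card_pos.mpr ⟨a0, hc1⟩
      have h6 := Finset.card_insert_le c ((nbr G c).erase a0)
      have h7 : (nbr G b).card = dg G b := rfl
      omega
    obtain ⟨u, hbu, hcu, huc, hua⟩ := hu
    obtain ⟨G', hdg', hnbr'⟩ := switch G (mem_nbr.mp hcmem) hnadj hba hbu hcu huc hua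
    refine ih G' (fun i => (hdg' i).trans (hdeg i)) ?_
    have hfilter : (nbr G' a0).filter (fun x => v ≤ dg G' x) =
        insert b ((nbr G a0).filter fun x => v ≤ dg G x) := by
      rw [hnbr', Finset.filter_congr (fun x _ => iff_of_eq (by rw [hdg' x])),
        Finset.filter_insert, if_pos hbv, Finset.filter_erase,
        Finset.erase_eq_of_notMem (by simp only [Finset.mem_filter]; omega)]
    rw [hfilter, Finset.card_insert_of_notMem (fun h => hbn (Finset.filter_subset _ _ h))]
    omega

end Main

/-- Case (1) of the 2-Reduction Lemma, specialized to `i = 1` (so that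
`tilde d_1 = d_1 + 1`): if `2 ≤ j ≤ n` and `d j = d (d 1 + 1)`, then `D` is graphic
iff the sequence obtained by subtracting `1` from `d 1` and from `d j` is graphic. -/
theorem stmt_3 (n : ℕ) (d : ℕ → ℕ) (hn : 1 ≤ n)
    (hpos : ∀ i, 1 ≤ i → i ≤ n → 1 ≤ d i)
    (hmono : ∀ i j, 1 ≤ i → i ≤ j → j ≤ n → d j ≤ d i)
    (h1 : d 1 < n)
    (j : ℕ) (hj2 : 2 ≤ j) (hjn : j ≤ n)
    (hval : d j = d (d 1 + 1)) :
    IsGraphic (List.ofFn fun i : Fin n => d (i.1 + 1)) ↔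
      IsGraphic (List.ofFn fun i : Fin n =>
        if i.1 + 1 = 1 ∨ i.1 + 1 = j then d (i.1 + 1) - 1 else d (i.1 + 1)) := by
  classical
  have hn0 : 0 < n := hn
  have hd1 : 1 ≤ d 1 := hpos 1 le_rfl (by omega)
  have hdj : 1 ≤ d j := hpos j (by omega) hjn
  have hv1 : 1 ≤ d (d 1 + 1) := hpos _ (by omega) (by omega)
  obtain ⟨a0, ha0⟩ : ∃ a : Fin n, a.1 = 0 := ⟨⟨0, hn0⟩, rfl⟩
  obtain ⟨w, hwv⟩ : ∃ x : Fin n, x.1 = j - 1 := ⟨⟨j - 1, by omega⟩, rfl⟩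
  have hwj : w.1 + 1 = j := by omega
  have hwa0 : w ≠ a0 := fun h => by rw [h] at hwv; omega
  have ha0p1 : a0.1 + 1 = 1 := by omega
  constructor
  · intro hg
    rw [isGraphic_iff] at hg ⊢
    obtain ⟨G, hdeg⟩ := hg
    obtain ⟨G', b, hdeg', hadj, hbv⟩ :=
      forward_aux hn0 hpos hmono h1 a0 ha0 (d 1) G hdeg (by omega)
    obtain ⟨G'', h2a, h2b, h2o⟩ := delEdge G' hadj
    have hba0 : b ≠ a0 := hadj.ne'
    have hb1 : 1 ≤ b.1 := by
      rcases Nat.eq_zero_or_pos b.1 with h0 | h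
      · exact absurd (Fin.ext (by omega)) hba0
      · exact h
    refine ⟨G''.comap (Equiv.swap b w), fun i => ?_⟩
    rw [dg_comap]
    by_cases hiw : i = w
    · subst hiw
      rw [Equiv.swap_apply_right, h2b, hdeg' b, hbv, if_pos (Or.inr hwj), hwj, hval]
    · by_cases hib : i = b
      · subst hib
        rw [Equiv.swap_apply_left, h2o w hwa0 (Ne.symm hiw), hdeg' w, hwj]
        have hc2 : ¬(i.1 + 1 = j) := fun h => hiw (Fin.ext (by omega))
        rw [if_neg (by omega), hval, ← hbv]
      · rw [Equiv.swap_apply_of_ne_of_ne hib hiw]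
        by_cases hia : i = a0
        · subst hia
          rw [h2a, hdeg' i, ha0p1]
          simp
        · have hc1 : ¬(i.1 + 1 = 1) := by
            intro h
            exact hia (Fin.ext (by omega))
          have hc2 : ¬(i.1 + 1 = j) := fun h => hiw (Fin.ext (by omega))
          rw [h2o i hia hib, hdeg' i, if_neg (by omega)]
  · intro hg
    rw [isGraphic_iff] at hg ⊢
    obtain ⟨G, hdeg⟩ := hg
    have hdga : dg G a0 = d 1 - 1 := by
      rw [hdeg a0, if_pos (Or.inl ha0p1), ha0p1]
    have hdgw : dg G w = d j - 1 := by
      rw [hdeg w, if_pos (Or.inr hwj), hwj]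
    have hother : ∀ x : Fin n, x ≠ a0 → x ≠ w → dg G x = d (x.1 + 1) := by
      intro x hxa hxw
      rw [hdeg x, if_neg]
      push_neg
      constructor
      · intro h; exact hxa (Fin.ext (by omega))
      · intro h; exact hxw (Fin.ext (by omega))
    by_cases hadj : G.Adj a0 w
    · have hx : ∃ x : Fin n, (1 ≤ x.1 ∧ x.1 ≤ d 1) ∧ x ∉ nbr G a0 := by
        by_contra hxx
        push_neg at hxx
        have hsub : (Finset.univ.filter fun x : Fin n => 1 ≤ x.1 ∧ x.1 ≤ d 1) ⊆ nbr G a0 := by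
          intro x hxm
          simp only [Finset.mem_filter, Finset.mem_univ, true_and] at hxm
          exact hxx x hxm
        have hcard := Finset.card_le_card hsub
        have hS := S_card hn0 (d 1) h1
        have : (nbr G a0).card = d 1 - 1 := hdga
        omega
      obtain ⟨x, ⟨hx1, hx2⟩, hxn⟩ := hx
      have hxa : x ≠ a0 := fun h => by rw [h] at hx1; omega
      have hxnadj : ¬G.Adj a0 x := fun h => hxn (mem_nbr.mpr h)
      have hxw : x ≠ w := by
        rintro rfl
        exact hxn (mem_nbr.mpr hadj)
      have hdgx : dg G x = d (x.1 + 1) := hother x hxa hxw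
      have hxge : d (d 1 + 1) ≤ d (x.1 + 1) := hmono _ _ (by omega) (by omega) (by omega)
      by_cases hy : ∃ y, G.Adj x y ∧ ¬G.Adj w y ∧ y ≠ w
      · obtain ⟨y, hxy, hwy, hynw⟩ := hy
        have hyna : y ≠ a0 := fun h => hxnadj (h ▸ hxy).symm
        obtain ⟨G1, hdg1, hnbr1⟩ :=
          switch G hadj hxnadj (Ne.symm hxa) hxy hwy hynw hyna
        have hnadj1 : ¬G1.Adj a0 w := by
          intro h
          have hmem := mem_nbr.mpr h
          rw [hnbr1, Finset.mem_insert, Finset.mem_erase] at hmem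
          rcases hmem with h' | ⟨h', -⟩
          · exact hxw h'.symm
          · exact h' rfl
        obtain ⟨G2, hg2a, hg2b, hg2o⟩ := addEdge G1 (Ne.symm hwa0) hnadj1
        refine ⟨G2, fun i => ?_⟩
        by_cases hia : i = a0
        · subst hia
          rw [hg2a, hdg1, hdga, ha0p1]
          omega
        · by_cases hiw : i = w
          · subst hiw
            rw [hg2b, hdg1, hdgw, hwj]
            omega
          · rw [hg2o i hia hiw, hdg1, hother i hia hiw]
      · push_neg at hy
        have hsub : nbr G x ⊆ insert w ((nbr G w).erase a0) := by
          intro y hym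
          have hxy : G.Adj x y := mem_nbr.mp hym
          have hyna : y ≠ a0 := fun h => hxnadj (h ▸ hxy).symm
          by_cases hwy : G.Adj w y
          · exact Finset.mem_insert_of_mem (Finset.mem_erase.mpr ⟨hyna, mem_nbr.mpr hwy⟩)
          · exact Finset.mem_insert.mpr (Or.inl (hy y hxy hwy))
        have hcard := Finset.card_le_card hsub
        have ha0w : a0 ∈ nbr G w := mem_nbr.mpr hadj.symm
        have h4 : ((nbr G w).erase a0).card = dg G w - 1 := Finset.card_erase_of_mem ha0w
        have h5 : 1 ≤ dg G w := Finset.card_pos.mpr ⟨a0, ha0w⟩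
        have h6 := Finset.card_insert_le w ((nbr G w).erase a0)
        have h7 : (nbr G x).card = dg G x := rfl
        have hxeq : d (x.1 + 1) = d (d 1 + 1) - 1 := by
          rw [← hdgx]
          omega
        obtain ⟨G2, hg2a, hg2b, hg2o⟩ := addEdge G (Ne.symm hxa) hxnadj
        refine ⟨G2.comap (Equiv.swap x w), fun i => ?_⟩
        rw [dg_comap]
        by_cases hiw : i = w
        · subst hiw
          rw [Equiv.swap_apply_right, hg2b, hdgx, hxeq, hwj, ← hval]
          omega
        · by_cases hix : i = x
          · subst hix
            rw [Equiv.swap_apply_left, hg2o w hwa0 (Ne.symm hiw), hdgw, hxeq, hval]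
          · rw [Equiv.swap_apply_of_ne_of_ne hix hiw]
            by_cases hia : i = a0
            · subst hia
              rw [hg2a, hdga, ha0p1]
              omega
            · rw [hg2o i hia hix, hother i hia hiw]
    · obtain ⟨G2, hg2a, hg2b, hg2o⟩ := addEdge G (Ne.symm hwa0) hadj
      refine ⟨G2, fun i => ?_⟩
      by_cases hia : i = a0
      · subst hia
        rw [hg2a, hdga, ha0p1]
        omega
      · by_cases hiw : i = w
        · subst hiw
          rw [hg2b, hdgw, hwj]
          omega
        · rw [hg2o i hia hiw, hother i hia hiw]
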